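/- Let ℓ be a prime and g > 1. If H is a subgroup of Sp_{2g}(ℤ/ℓℤ) such that {±h : h ∈ H} = Sp_{2g}(ℤ/ℓℤ), then H = Sp_{2g}(ℤ/ℓℤ). -/
import Mathlib

/-- If `H ≤ Sp_{2g}(ℤ/ℓℤ)` (`ℓ` prime, `g > 1`) satisfies `±H = Sp_{2g}(ℤ/ℓℤ)`,
then `H = Sp_{2g}(ℤ/ℓℤ)`. -/
theorem stmt_12 (g ℓ : ℕ) (hℓ : ℓ.Prime) (hg : 1 < g)
    (H : Subgroup ↥(Matrix.symplecticGroup (Fin g) (ZMod ℓ)))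
    (hpm : ∀ x : ↥(Matrix.symplecticGroup (Fin g) (ZMod ℓ)),
      x ∈ H ∨ ∃ y ∈ H, (y : Matrix (Fin g ⊕ Fin g) (Fin g ⊕ Fin g) (ZMod ℓ)) =
        -(x : Matrix (Fin g ⊕ Fin g) (Fin g ⊕ Fin g) (ZMod ℓ))) :
    H = ⊤ := by
  -- First, produce an element of `H` whose underlying matrix is `-1`, using `J`.
  set j : ↥(Matrix.symplecticGroup (Fin g) (ZMod ℓ)) :=
    ⟨Matrix.J (Fin g) (ZMod ℓ), SymplecticGroup.J_mem (Fin g) (ZMod ℓ)⟩ with hj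
  obtain ⟨m, hmH, hm⟩ :
      ∃ m ∈ H, (m : Matrix (Fin g ⊕ Fin g) (Fin g ⊕ Fin g) (ZMod ℓ)) = -1 := by
    rcases hpm j with hjH | ⟨y, hyH, hy⟩
    · exact ⟨j * j, mul_mem hjH hjH, by
        simp [Submonoid.coe_mul, hj, Matrix.J_squared]⟩
    · exact ⟨y * y, mul_mem hyH hyH, by
        simp only [Submonoid.coe_mul, hy]
        simp [hj, Matrix.neg_mul, Matrix.mul_neg, Matrix.J_squared]⟩
  -- Now every element of the group is in `H`.
  ext x
  simp only [Subgroup.mem_top, iff_true]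
  rcases hpm x with hxH | ⟨y, hyH, hy⟩
  · exact hxH
  · have : m * y = x := by
      ext1
      simp [Submonoid.coe_mul, hm, hy, Matrix.neg_mul]
    exact this ▸ mul_mem hmH hyH
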